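/- Let σ be a good activation and w_1, …, w_r ∈ ℝ^d pairwise distinct. Then there exist x_1, …, x_r ∈ ℝ^d such that the r × r matrix with entries σ(w_k · x_i) is invertible. -/

import Mathlib

open Filter Finset Topology

/-- Coefficients of a power series summing to zero on an interval vanish. -/
lemma aux_coeff_zero (b : ℕ → ℝ) (ε : ℝ) (hε : 0 < ε)
    (h : ∀ t : ℝ, |t| < ε → HasSum (fun j => b j * t ^ j) 0) : ∀ j, b j = 0 := by
  set p := FormalMultilinearSeries.ofScalars ℝ b with hp
  have hε2 : (0:ℝ) < ε / 2 := by linarith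
  have hsum := h (ε / 2) (by rw [abs_of_pos hε2]; linarith)
  have htend : Tendsto (fun n => b n * (ε / 2) ^ n) atTop (𝓝 0) :=
    hsum.summable.tendsto_atTop_zero
  have hr : ENNReal.ofReal (ε / 2) ≤ p.radius := by
    have hbig : (fun n => ‖p n‖ * ((ε / 2).toNNReal : ℝ) ^ n) =O[atTop] (fun _ => (1 : ℝ)) := by
      have heq : (fun n => ‖p n‖ * ((ε / 2).toNNReal : ℝ) ^ n)
          = fun n => |b n * (ε / 2) ^ n| := by
        funext n
        rw [hp, FormalMultilinearSeries.ofScalars_norm, Real.coe_toNNReal _ hε2.le,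
          abs_mul, abs_pow, abs_of_pos hε2, Real.norm_eq_abs]
      rw [heq]
      have : Tendsto (fun n => |b n * (ε / 2) ^ n|) atTop (𝓝 |0|) := htend.abs
      rw [abs_zero] at this
      exact this.isBigO_one ℝ
    exact p.le_radius_of_isBigO hbig
  have hball : HasFPowerSeriesOnBall (fun _ : ℝ => (0 : ℝ)) p 0 (ENNReal.ofReal (ε / 2)) :=
    { r_le := hr
      r_pos := ENNReal.ofReal_pos.mpr hε2
      hasSum := by
        intro y hy
        rw [Metric.emetric_ball] at hy
        rw [Metric.mem_ball, Real.dist_eq, sub_zero] at hy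
        have hy' : |y| < ε := by linarith
        have hfn : (fun n => p n fun _ => y) = fun j => b j * y ^ j := by
          funext n
          rw [hp, FormalMultilinearSeries.ofScalars_apply_eq, smul_eq_mul]
        show HasSum (fun n => p n fun _ => y) _
        rw [hfn]
        exact h y hy' }
  have h0 : p = 0 := hball.hasFPowerSeriesAt.eq_zero
  intro j
  have : b = 0 := (FormalMultilinearSeries.ofScalars_series_eq_zero ℝ).mp h0
  exact congrFun this j

/-- The combinatorial core: vanishing power sums at `0`, infinitely many odd and
infinitely many even exponents force all coefficients to vanish. -/
lemma aux_comb {r : ℕ} (a : Fin r → ℝ) (ha : Function.Injective a) (l : Fin r → ℝ)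
    (h0 : ∑ k, l k = 0)
    (hodd : ∀ N : ℕ, ∃ j, Odd j ∧ N < j ∧ ∑ k, l k * a k ^ j = 0)
    (heven : ∀ N : ℕ, ∃ j, Even j ∧ N < j ∧ ∑ k, l k * a k ^ j = 0) :
    ∀ k, l k = 0 := by
  by_contra hne
  push_neg at hne
  obtain ⟨k₁, hk₁⟩ := hne
  obtain ⟨k₀, hk₀mem, hk₀max⟩ :=
    (Finset.univ.filter fun k => l k ≠ 0).exists_max_image (fun k => |a k|)
      ⟨k₁, by simp [hk₁]⟩
  simp only [Finset.mem_filter, Finset.mem_univ, true_and] at hk₀mem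
  have hmax : ∀ k, l k ≠ 0 → |a k| ≤ |a k₀| := fun k hk => hk₀max k (by simp [hk])
  set m := |a k₀| with hm
  rcases eq_or_lt_of_le (abs_nonneg (a k₀)) with hm0 | hm0
  · -- m = 0 : all a k with l k ≠ 0 are 0, so only k₀
    have h3 : a k₀ = 0 := abs_eq_zero.mp hm0.symm
    have hsingle : ∀ k, k ≠ k₀ → l k = 0 := by
      intro k hk
      by_contra hlk
      have h1 : |a k| ≤ m := hmax k hlk
      have h2 : a k = 0 := abs_eq_zero.mp (le_antisymm (hm0 ▸ h1) (abs_nonneg _))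
      exact hk (ha (h2.trans h3.symm))
    have hsum : ∑ k, l k = l k₀ :=
      Finset.sum_eq_single k₀ (fun k _ hk => hsingle k hk)
        (fun h => absurd (Finset.mem_univ k₀) h)
    exact hk₀mem (hsum.symm.trans h0)
  · -- m > 0
    set x : Fin r → ℝ := fun k => a k / m with hx
    have hmne : m ≠ 0 := ne_of_gt hm0
    have hxk₀ : x k₀ ^ 2 = 1 := by
      rw [hx]
      simp only [div_pow]
      rw [hm, sq_abs]
      exact div_self (pow_ne_zero 2 (abs_pos.mp hm0))
    have key : ∀ j, (∑ k, l k * a k ^ j = 0) → ∑ k, l k * x k ^ j = 0 := by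
      intro j hj
      have : ∑ k, l k * x k ^ j = (∑ k, l k * a k ^ j) / m ^ j := by
        rw [Finset.sum_div]
        exact Finset.sum_congr rfl fun k _ => by rw [hx]; rw [div_pow]; ring
      rw [this, hj, zero_div]
    have tend : ∀ e : ℕ, Tendsto (fun i => ∑ k, l k * x k ^ (2 * i + e)) atTop
        (𝓝 (∑ k, if x k ^ 2 = 1 then l k * x k ^ e else 0)) := by
      intro e
      apply tendsto_finset_sum
      intro k _
      rcases eq_or_ne (x k ^ 2) 1 with h1 | h1
      · rw [if_pos h1]
        have heqf : (fun i : ℕ => l k * x k ^ (2 * i + e)) = fun _ => l k * x k ^ e := by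
          funext i
          rw [pow_add, pow_mul, h1, one_pow, one_mul]
        rw [heqf]
        exact tendsto_const_nhds
      · rw [if_neg h1]
        rcases eq_or_ne (l k) 0 with h2 | h2
        · simp only [h2, zero_mul]
          exact tendsto_const_nhds
        · have hle : |a k| ≤ m := hmax k h2
          have hxle : |x k| ≤ 1 := by
            rw [hx]
            rw [abs_div, abs_of_pos hm0]
            exact div_le_one_of_le₀ hle hm0.le
          have hx2 : x k ^ 2 < 1 := by
            have h3 : x k ^ 2 ≤ 1 := by nlinarith [sq_abs (x k), abs_nonneg (x k)]
            exact lt_of_le_of_ne h3 h1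
          have htz := tendsto_pow_atTop_nhds_zero_of_lt_one (sq_nonneg (x k)) hx2
          have := htz.const_mul (l k * x k ^ e)
          rw [mul_zero] at this
          refine Tendsto.congr (fun i => ?_) this
          rw [pow_add, pow_mul]
          ring
    have L0 : ∑ k, (if x k ^ 2 = 1 then l k * x k ^ 0 else 0) = 0 := by
      have hfreq : ∃ᶠ i in atTop, (∑ k, l k * x k ^ (2 * i + 0)) ∈ ({0} : Set ℝ) := by
        rw [frequently_atTop]
        intro N
        obtain ⟨j, hje, hjN, hjs⟩ := heven (2 * N)
        obtain ⟨i, rfl⟩ := hje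
        refine ⟨i, by omega, ?_⟩
        show ∑ k, l k * x k ^ (2 * i + 0) = 0
        have h2i : 2 * i + 0 = i + i := by omega
        simp only [h2i]
        exact key _ hjs
      have := mem_closure_of_frequently_of_tendsto hfreq (tend 0)
      simpa using this
    have L1 : ∑ k, (if x k ^ 2 = 1 then l k * x k ^ 1 else 0) = 0 := by
      have hfreq : ∃ᶠ i in atTop, (∑ k, l k * x k ^ (2 * i + 1)) ∈ ({0} : Set ℝ) := by
        rw [frequently_atTop]
        intro N
        obtain ⟨j, hjo, hjN, hjs⟩ := hodd (2 * N + 1)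
        obtain ⟨i, rfl⟩ := hjo
        refine ⟨i, by omega, ?_⟩
        exact key _ hjs
      have := mem_closure_of_frequently_of_tendsto hfreq (tend 1)
      simpa using this
    have hfinal : ∑ k, (if x k ^ 2 = 1 then l k * (1 + x k₀ * x k) else 0) = 0 := by
      have hsplit : ∑ k, (if x k ^ 2 = 1 then l k * (1 + x k₀ * x k) else 0)
          = ∑ k, ((if x k ^ 2 = 1 then l k * x k ^ 0 else 0)
              + x k₀ * (if x k ^ 2 = 1 then l k * x k ^ 1 else 0)) := by
        refine Finset.sum_congr rfl fun k _ => ?_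
        by_cases hk : x k ^ 2 = 1
        · rw [if_pos hk, if_pos hk, if_pos hk]; ring
        · rw [if_neg hk, if_neg hk, if_neg hk]; ring
      rw [hsplit, Finset.sum_add_distrib, ← Finset.mul_sum, L0, L1, mul_zero, add_zero]
    have hsum2 : ∑ k, (if x k ^ 2 = 1 then l k * (1 + x k₀ * x k) else 0) = 2 * l k₀ := by
      refine Finset.sum_eq_single k₀ (fun k _ hk => ?_) (fun h => absurd (Finset.mem_univ k₀) h)
        |>.trans ?_
      · by_cases hk1 : x k ^ 2 = 1
        · rw [if_pos hk1]
          have hxx : x k = -x k₀ := by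
            have hsq : x k ^ 2 = x k₀ ^ 2 := hk1.trans hxk₀.symm
            have hfac : (x k - x k₀) * (x k + x k₀) = 0 := by linear_combination hsq
            rcases mul_eq_zero.mp hfac with h | h
            · exfalso
              have : x k = x k₀ := by linarith
              have : a k = a k₀ := by
                simp only [hx] at this
                field_simp [hmne] at this
                exact this
              exact hk (ha this)
            · linarith
          rw [hxx]
          have : 1 + x k₀ * -x k₀ = 0 := by linear_combination -hxk₀
          rw [this, mul_zero]
        · rw [if_neg hk1]
      · rw [if_pos hxk₀]
        linear_combination l k₀ * hxk₀
    have : (2 : ℝ) * l k₀ = 0 := hsum2.symm.trans hfinal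
    exact hk₀mem (by linarith)

/-- Linearly independent functions admit sample points producing an invertible matrix. -/
lemma aux_det {α : Type*} : ∀ (r : ℕ) (f : Fin r → α → ℝ),
    LinearIndependent ℝ f → ∃ x : Fin r → α, (Matrix.of fun i k => f k (x i)).det ≠ 0 := by
  intro r
  induction r with
  | zero =>
    intro f _
    exact ⟨Fin.elim0, by simp [Matrix.det_fin_zero]⟩
  | succ n ih =>
    intro f hf
    obtain ⟨x', hx'⟩ := ih (fun k => f k.castSucc)
      (hf.comp Fin.castSucc (Fin.castSucc_injective n))
    by_contra hcon
    push_neg at hcon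
    set d : Fin (n + 1) → ℝ := fun j =>
      (-1 : ℝ) ^ ((n : ℕ) + (j : ℕ)) *
        (Matrix.of fun (p : Fin n) (q : Fin n) => f (j.succAbove q) (x' p)).det with hd
    have hsum0 : ∑ j, d j • (f j) = 0 := by
      funext y
      set xf : Fin (n + 1) → α := Fin.snoc x' y with hxf
      have hdet := hcon xf
      rw [Matrix.det_succ_row _ (Fin.last n)] at hdet
      simp only [Finset.sum_apply, Pi.smul_apply, smul_eq_mul, Pi.zero_apply]
      rw [← hdet]
      refine Finset.sum_congr rfl fun j _ => ?_
      have hsub : ((Matrix.of fun i k => f k (xf i)).submatrix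
            (Fin.last n).succAbove j.succAbove)
          = Matrix.of fun (p : Fin n) (q : Fin n) => f (j.succAbove q) (x' p) := by
        ext p q
        simp [Matrix.submatrix_apply, Fin.succAbove_last, hxf, Fin.snoc_castSucc]
      rw [hd]
      rw [hsub]
      simp only [Matrix.of_apply, hxf, Fin.snoc_last, hsub, Fin.val_last]
      ring
    have hzero : ∀ j, d j = 0 := Fintype.linearIndependent_iff.mp hf d hsum0
    have hlast : d (Fin.last n) ≠ 0 := by
      rw [hd]
      simp only [Fin.val_last]
      have h1 : (-1 : ℝ) ^ (n + n) = 1 := Even.neg_one_pow ⟨n, rfl⟩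
      rw [h1, one_mul]
      have h2 : (Matrix.of fun (p : Fin n) (q : Fin n) => f ((Fin.last n).succAbove q) (x' p))
          = Matrix.of fun (p : Fin n) (q : Fin n) => f q.castSucc (x' p) := by
        ext p q
        simp [Fin.succAbove_last]
      rw [h2]
      exact hx'
    exact hlast (hzero _)

/-- Avoiding finitely many hyperplanes. -/
lemma aux_dir {E : Type*} [NormedAddCommGroup E] [InnerProductSpace ℝ E]
    (s : Finset E) (hs : (0 : E) ∉ s) : ∃ v : E, ∀ u ∈ s, (inner ℝ u v : ℝ) ≠ 0 := by
  classical
  induction s using Finset.induction_on with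
  | empty => exact ⟨0, by simp⟩
  | @insert u s hu ih =>
    have hu0 : u ≠ 0 := fun h => hs (h ▸ Finset.mem_insert_self u s)
    have h0s : (0 : E) ∉ s := fun h => hs (Finset.mem_insert_of_mem h)
    obtain ⟨v, hv⟩ := ih h0s
    have hfin : ∀ u' ∈ insert u s,
        {t : ℝ | (inner ℝ u' v : ℝ) + t * (inner ℝ u' u : ℝ) = 0}.Finite := by
      intro u' hu'
      have hab : (inner ℝ u' v : ℝ) ≠ 0 ∨ (inner ℝ u' u : ℝ) ≠ 0 := by
        rcases Finset.mem_insert.mp hu' with rfl | hmem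
        · exact Or.inr fun h => hu0 ((inner_self_eq_zero (𝕜 := ℝ)).mp h)
        · exact Or.inl (hv u' hmem)
      apply Set.Subsingleton.finite
      intro t1 ht1 t2 ht2
      simp only [Set.mem_setOf_eq] at ht1 ht2
      rcases eq_or_ne (inner ℝ u' u : ℝ) 0 with hb | hb
      · exfalso
        rw [hb, mul_zero, add_zero] at ht1
        rcases hab with h | h
        · exact h ht1
        · exact h hb
      · have : (t1 - t2) * (inner ℝ u' u : ℝ) = 0 := by linarith [ht1, ht2]
        have := (mul_eq_zero.mp this).resolve_right hb
        linarith
    have hbadfin : (⋃ u' ∈ (↑(insert u s) : Set E),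
        {t : ℝ | (inner ℝ u' v : ℝ) + t * (inner ℝ u' u : ℝ) = 0}).Finite :=
      Set.Finite.biUnion (insert u s).finite_toSet (fun u' hu' => hfin u' hu')
    obtain ⟨t, ht⟩ := hbadfin.infinite_compl.nonempty
    refine ⟨v + t • u, fun u' hu' heq => ?_⟩
    rw [inner_add_right, real_inner_smul_right] at heq
    exact ht (Set.mem_biUnion (by exact_mod_cast hu') heq)

theorem stmt8 (σ : ℝ → ℝ) (R : ℝ) (hR : 0 < R) (c : ℕ → ℝ)
    (hσ : ∀ x ∈ Set.Ioo (-R) R, HasSum (fun j => c j * x ^ j) (σ x))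
    (hc0 : c 0 ≠ 0)
    (hodd : ∀ N : ℕ, ∃ j, Odd j ∧ N < j ∧ c j ≠ 0)
    (heven : ∀ N : ℕ, ∃ j, Even j ∧ N < j ∧ c j ≠ 0)
    (d r : ℕ) (w : Fin r → EuclideanSpace ℝ (Fin d)) (hw : Function.Injective w) :
    ∃ x : Fin r → EuclideanSpace ℝ (Fin d),
      (Matrix.of fun i k => σ (inner ℝ (w k) (x i) : ℝ)).det ≠ 0 := by
  classical
  have hli : LinearIndependent ℝ
      (fun k => fun xx : EuclideanSpace ℝ (Fin d) => σ (inner ℝ (w k) xx : ℝ)) := by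
    rw [Fintype.linearIndependent_iff]
    intro l hl
    -- choose a direction with injective inner products
    obtain ⟨v, hv⟩ : ∃ v : EuclideanSpace ℝ (Fin d),
        Function.Injective (fun k => (inner ℝ (w k) v : ℝ)) := by
      obtain ⟨v, hv⟩ := aux_dir
        (((Finset.univ ×ˢ Finset.univ).filter fun p : Fin r × Fin r => p.1 ≠ p.2).image
          fun p => w p.1 - w p.2)
        (by
          simp only [Finset.mem_image, not_exists]
          rintro ⟨k, k'⟩ ⟨hmem, heq⟩
          simp only [Finset.mem_filter] at hmem
          exact hmem.2 (hw (sub_eq_zero.mp heq)))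
      refine ⟨v, fun k k' hkk' => ?_⟩
      by_contra hne
      have hmem : w k - w k' ∈
          (((Finset.univ ×ˢ Finset.univ).filter fun p : Fin r × Fin r => p.1 ≠ p.2).image
            fun p => w p.1 - w p.2) := by
        refine Finset.mem_image.mpr ⟨(k, k'), ?_, rfl⟩
        simp [hne]
      have := hv _ hmem
      rw [inner_sub_left] at this
      simp only at hkk'
      exact this (by rw [hkk']; ring)
    set a : Fin r → ℝ := fun k => (inner ℝ (w k) v : ℝ) with hadef
    have ha : Function.Injective a := hv
    set M : ℝ := 1 + ∑ k, |a k| with hM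
    have hMpos : 0 < M := by positivity
    have hMk : ∀ k, |a k| ≤ M := by
      intro k
      have h1 : |a k| ≤ ∑ k', |a k'| :=
        Finset.single_le_sum (fun k' _ => abs_nonneg (a k')) (Finset.mem_univ k)
      linarith
    set ε : ℝ := R / M with hε
    have hεpos : 0 < ε := div_pos hR hMpos
    have hb : ∀ t : ℝ, |t| < ε → HasSum (fun j => (c j * ∑ k, l k * a k ^ j) * t ^ j) 0 := by
      intro t ht
      have hsum : ∀ k, HasSum (fun j => l k * (c j * (a k * t) ^ j)) (l k * σ (a k * t)) := by
        intro k
        have habs : |a k * t| < R := by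
          rw [abs_mul]
          calc |a k| * |t| ≤ M * |t| := by
                have := abs_nonneg t; nlinarith [hMk k]
            _ < M * ε := by
                have := hMk k
                exact mul_lt_mul_of_pos_left ht hMpos
            _ = R := by rw [hε]; field_simp
        have hmem : a k * t ∈ Set.Ioo (-R) R := by
          rw [Set.mem_Ioo]
          constructor <;> [linarith [abs_lt.mp habs]; linarith [abs_lt.mp habs]]
        exact (hσ (a k * t) hmem).mul_left (l k)
      have htotal := hasSum_sum (fun k (_ : k ∈ Finset.univ) => hsum k)
      have h2 : ∑ k, l k * σ (a k * t) = 0 := by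
        have hcf := congrFun hl (t • v)
        simp only [Finset.sum_apply, Pi.smul_apply, smul_eq_mul, Pi.zero_apply] at hcf
        rw [← hcf]
        refine Finset.sum_congr rfl fun k _ => ?_
        congr 1
        rw [real_inner_smul_right]
        simp only [hadef]
        ring
      rw [h2] at htotal
      have hfun : (fun j => (c j * ∑ k, l k * a k ^ j) * t ^ j)
          = fun j => ∑ k, l k * (c j * (a k * t) ^ j) := by
        funext j
        rw [Finset.mul_sum, Finset.sum_mul]
        refine Finset.sum_congr rfl fun k _ => ?_
        rw [mul_pow]
        ring
      rw [hfun]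
      exact htotal
    have hb0 := aux_coeff_zero _ ε hεpos hb
    have hpow : ∀ j, c j ≠ 0 → ∑ k, l k * a k ^ j = 0 := fun j hcj =>
      (mul_eq_zero.mp (hb0 j)).resolve_left hcj
    apply aux_comb a ha l
    · have := hpow 0 hc0
      simpa using this
    · intro N
      obtain ⟨j, hj1, hj2, hj3⟩ := hodd N
      exact ⟨j, hj1, hj2, hpow j hj3⟩
    · intro N
      obtain ⟨j, hj1, hj2, hj3⟩ := heven N
      exact ⟨j, hj1, hj2, hpow j hj3⟩
  obtain ⟨x, hx⟩ := aux_det r _ hli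
  exact ⟨x, hx⟩
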